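/- Let R be a ring. Let dw(F) denote the class of chain complexes of flat R-modules, dw(P) the class of complexes of projective modules, and F̃ the class of exact complexes of flat modules with flat cycle modules. Given Neeman's theorem that F̃ = dw(F) ∩ dw(P)^⊥, and given that (dw(F), dw(F)^⊥) and (F̃, F̃^⊥) are complete cotorsion pairs with dw(P)^⊥ thick, conclude that (dw(F), dw(P)^⊥, F̃^⊥) is a Hovey triple on Ch(R). -/

import Mathlib

open CategoryTheory Limits

universe w v u

section Preamble

variable {A : Type u} [Category.{v} A] [Abelian A] [HasExt.{w} A]

/-- `Ext^n(X, Y) = 0`. -/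
def extVanish (X Y : A) (n : ℕ) : Prop := Subsingleton (Abelian.Ext X Y n)

/-- The right `Ext¹`-orthogonal class. -/
def rightPerp (𝒳 : Set A) : Set A := {Y | ∀ X ∈ 𝒳, extVanish X Y 1}

/-- The left `Ext¹`-orthogonal class. -/
def leftPerp (𝒴 : Set A) : Set A := {X | ∀ Y ∈ 𝒴, extVanish X Y 1}

/-- `(𝒳, 𝒴)` is a cotorsion pair. -/
def IsCotorsionPair (𝒳 𝒴 : Set A) : Prop := 𝒴 = rightPerp 𝒳 ∧ 𝒳 = leftPerp 𝒴

/-- `(𝒳, 𝒴)` is a complete cotorsion pair: it has enough injectives and enough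
projectives. -/
def IsCompleteCP (𝒳 𝒴 : Set A) : Prop :=
  IsCotorsionPair 𝒳 𝒴 ∧
  (∀ M : A, ∃ S : ShortComplex A, S.ShortExact ∧ S.X₁ = M ∧ S.X₂ ∈ 𝒴 ∧ S.X₃ ∈ 𝒳) ∧
  (∀ M : A, ∃ S : ShortComplex A, S.ShortExact ∧ S.X₁ ∈ 𝒴 ∧ S.X₂ ∈ 𝒳 ∧ S.X₃ = M)

/-- `(𝒳, 𝒴)` is a hereditary cotorsion pair: `Ext^i(X, Y) = 0` for all `i ≥ 1`. -/
def IsHereditaryCP (𝒳 𝒴 : Set A) : Prop :=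
  IsCotorsionPair 𝒳 𝒴 ∧ ∀ n : ℕ, 1 ≤ n → ∀ X ∈ 𝒳, ∀ Y ∈ 𝒴, extVanish X Y n

/-- `X` is a retract of `Y`. -/
def IsRetractOf (X Y : A) : Prop := ∃ (i : X ⟶ Y) (r : Y ⟶ X), i ≫ r = 𝟙 X

/-- A class is thick if it is closed under retracts and satisfies two out of three
on short exact sequences. -/
def IsThick (𝒲 : Set A) : Prop :=
  (∀ X Y : A, IsRetractOf X Y → Y ∈ 𝒲 → X ∈ 𝒲) ∧
  ∀ S : ShortComplex A, S.ShortExact →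
    ((S.X₁ ∈ 𝒲 → S.X₂ ∈ 𝒲 → S.X₃ ∈ 𝒲) ∧ (S.X₁ ∈ 𝒲 → S.X₃ ∈ 𝒲 → S.X₂ ∈ 𝒲) ∧
      (S.X₂ ∈ 𝒲 → S.X₃ ∈ 𝒲 → S.X₁ ∈ 𝒲))

/-- A Hovey triple `(𝒞, 𝒲, ℱ)`, i.e. an abelian model structure. -/
def IsHoveyTriple (𝒞 𝒲 ℱ : Set A) : Prop :=
  IsThick 𝒲 ∧ IsCompleteCP (𝒞 ∩ 𝒲) ℱ ∧ IsCompleteCP 𝒞 (𝒲 ∩ ℱ)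

/-- A hereditary Hovey triple: both associated cotorsion pairs are hereditary. -/
def IsHereditaryHoveyTriple (𝒞 𝒲 ℱ : Set A) : Prop :=
  IsHoveyTriple 𝒞 𝒲 ℱ ∧ IsHereditaryCP (𝒞 ∩ 𝒲) ℱ ∧ IsHereditaryCP 𝒞 (𝒲 ∩ ℱ)

end Preamble

section Aux

variable {A : Type u} [Category.{v} A] [Abelian A] [HasExt.{w} A]

lemma rightPerp_antitone {𝒳 𝒳' : Set A} (h : 𝒳 ⊆ 𝒳') :
    rightPerp 𝒳' ⊆ rightPerp 𝒳 := fun _ hY X hX => hY X (h hX)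

end Aux

theorem statement9 (R : Type u) [CommRing R]
    [HasExt.{w} (ChainComplex (ModuleCat.{u} R) ℤ)]
    (dwF : Set (ChainComplex (ModuleCat.{u} R) ℤ))
    (hdwF : dwF = {X | ∀ n, Module.Flat R (X.X n)})
    (dwP : Set (ChainComplex (ModuleCat.{u} R) ℤ))
    (hdwP : dwP = {X | ∀ n, Projective (X.X n)})
    (tF : Set (ChainComplex (ModuleCat.{u} R) ℤ))
    (htF : tF = {X | (∀ n, Module.Flat R (X.X n)) ∧ (∀ n, X.ExactAt n) ∧
      ∀ n, Module.Flat R (X.cycles n)})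
    (hNeeman : tF = dwF ∩ rightPerp dwP)
    (h1 : IsCompleteCP dwF (rightPerp dwF))
    (h2 : IsCompleteCP tF (rightPerp tF))
    (hthick : IsThick (rightPerp dwP)) :
    IsHoveyTriple dwF (rightPerp dwP) (rightPerp tF) := by
  -- tF ⊆ dwF and tF ⊆ rightPerp dwP
  have htF_dwF : tF ⊆ dwF := by rw [hNeeman]; exact Set.inter_subset_left
  have htF_W : tF ⊆ rightPerp dwP := by rw [hNeeman]; exact Set.inter_subset_right
  -- dwP ⊆ dwF : projective complexes are flat complexes
  have hPF : dwP ⊆ dwF := by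
    rw [hdwP, hdwF]
    intro X hX n
    have : Projective (X.X n) := hX n
    have : Module.Projective R (X.X n) := by
      rw [IsProjective.iff_projective]
      exact this
    exact Module.Flat.of_projective
  -- rightPerp dwF ⊆ rightPerp dwP and rightPerp dwF ⊆ rightPerp tF
  have hsub1 : rightPerp dwF ⊆ rightPerp dwP := rightPerp_antitone hPF
  have hsub2 : rightPerp dwF ⊆ rightPerp tF := rightPerp_antitone htF_dwF
  -- key : rightPerp dwP ∩ rightPerp tF = rightPerp dwF
  have key : rightPerp dwP ∩ rightPerp tF = rightPerp dwF := by
    apply Set.Subset.antisymm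
    · rintro Y ⟨hYW, hYR⟩
      -- use enough injectives of (dwF, rightPerp dwF)
      obtain ⟨S, hS, hS1, hS2, hS3⟩ := h1.2.1 Y
      -- S.X₂ ∈ rightPerp dwP
      have hX2W : S.X₂ ∈ rightPerp dwP := hsub1 hS2
      -- by thickness, S.X₃ ∈ rightPerp dwP
      have hX3W : S.X₃ ∈ rightPerp dwP :=
        (hthick.2 S hS).1 (hS1 ▸ hYW) hX2W
      -- so S.X₃ ∈ tF
      have hX3tF : S.X₃ ∈ tF := by
        rw [hNeeman]; exact ⟨hS3, hX3W⟩
      -- the ext class of S vanishes, since Y ∈ rightPerp tF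
      intro F hF
      constructor
      intro a b
      have hvanish : ∀ e : Abelian.Ext F Y 1, e = 0 := by
        intro e
        have he : (hS1 ▸ e : Abelian.Ext F S.X₁ 1).comp
            (Abelian.Ext.mk₀ S.f) (add_zero 1) = 0 := by
          have := (hS2 F hF)
          exact this.elim _ _
        obtain ⟨x₃, hx₃⟩ := Abelian.Ext.covariant_sequence_exact₁ F hS _ he rfl
        have hcls : hS.extClass = 0 := by
          have hvan := hYR S.X₃ hX3tF
          -- hS.extClass : Ext S.X₃ S.X₁ 1, and S.X₁ = Y
          subst hS1
          exact hvan.elim _ _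
        rw [hcls, Abelian.Ext.comp_zero] at hx₃
        have : (hS1 ▸ e : Abelian.Ext F S.X₁ 1) = 0 := hx₃.symm
        subst hS1
        exact this
      rw [hvanish a, hvanish b]
    · exact fun Y hY => ⟨hsub1 hY, hsub2 hY⟩
  refine ⟨hthick, ?_, ?_⟩
  · rw [show dwF ∩ rightPerp dwP = tF from hNeeman.symm]
    exact h2
  · rw [show rightPerp dwP ∩ rightPerp tF = rightPerp dwF from key]
    exact h1
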